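/- For all ordinals α, β: the set H_α(β) is closed under the natural (Hessenberg) sum, i.e. γ, δ ∈ H_α(β) implies γ # δ ∈ H_α(β); and it is closed under the constructors in the reverse direction: γ # δ ∈ H_α(β) implies γ ∈ H_α(β) and δ ∈ H_α(β); ω^γ ∈ H_α(β) implies γ ∈ H_α(β); and Ω_γ ∈ H_α(β) implies γ ∈ H_α(β). -/

import Mathlib

open Ordinal Set
universe u

/-- Natural (Hessenberg) sum, as `Ordinal.nadd` was defined in Mathlib (removed since). -/
noncomputable def Ordinal.nadd : Ordinal.{u} → Ordinal.{u} → Ordinal.{u}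
  | a, b =>
    max (⨆ x : Set.Iio a, Order.succ (Ordinal.nadd x.1 b))
      (⨆ x : Set.Iio b, Order.succ (Ordinal.nadd a x.1))
termination_by a b => (a, b)
decreasing_by
  · exact Prod.Lex.left _ _ x.2
  · exact Prod.Lex.right _ x.2

infixl:65 " ♯ " => Ordinal.nadd

noncomputable section

/-- A cardinal is weakly inaccessible: uncountable, regular, and a limit cardinal. -/
def WeaklyInaccessible (c : Cardinal) : Prop :=
  Cardinal.aleph0 < c ∧ c.IsRegular ∧ ∀ x < c, Order.succ x < c

/-- `I` is (the initial ordinal of) the least weakly inaccessible cardinal. -/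
def I : Ordinal := (sInf {c : Cardinal | WeaklyInaccessible c}).ord

/-- `Om α` is `Ω_α`: `0` for `α = 0` and the initial ordinal of `ℵ_α` otherwise. -/
def Om (α : Ordinal) : Ordinal := if α = 0 then 0 else (Cardinal.aleph α).ord

/-- `R = {Ω_{μ+1} : μ < I} ∪ {I}`. -/
def R : Set Ordinal := {o | (∃ μ < I, o = Om (μ + 1)) ∨ o = I}

/-- Given the family of hulls at earlier stages, the collapse `ψ_σ`. -/
def psiOf (F : Set Ordinal → Set Ordinal) (σ : Ordinal) : Ordinal :=
  sInf ({β | β < σ ∧ σ ∈ F (Set.Iio β) ∧ F (Set.Iio β) ∩ Set.Iio σ ⊆ Set.Iio β} ∪ {σ})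

instance : WellFoundedRelation Ordinal := ⟨(· < ·), Ordinal.lt_wf⟩

/-- `H α X` is the least set of ordinals containing `X ∪ {0, I}` and closed under
ordinal addition, `β ↦ ω^β`, `β ↦ Ω_β`, and `(σ, β) ↦ ψ_σ β` for `σ ∈ R` and `β < α`. -/
def H (α : Ordinal) (X : Set Ordinal) : Set Ordinal :=
  ⋂₀ {Y : Set Ordinal | X ∪ {0, I} ⊆ Y ∧
      (∀ γ ∈ Y, ∀ δ ∈ Y, γ + δ ∈ Y) ∧
      (∀ γ ∈ Y, Ordinal.omega0 ^ γ ∈ Y) ∧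
      (∀ γ ∈ Y, Om γ ∈ Y) ∧
      (∀ σ ∈ R, ∀ β ∈ Y, β < α → σ ∈ Y → psiOf (H β) σ ∈ Y)}
termination_by α
decreasing_by assumption

/-- The collapsing function `ψ_σ α`. -/
def psi (σ α : Ordinal) : Ordinal := psiOf (H α) σ

/-- The relation `δ₀ ≪ δ₁ {η}`. -/
def llr (η δ₀ δ₁ : Ordinal) : Prop :=
  δ₀ < δ₁ ∧ ∀ σ ∈ R, ∀ α : Ordinal,
    δ₁ ∈ H α (Set.Iio (psi σ α)) → η ∈ H α (Set.Iio (psi σ α)) → δ₀ ∈ H α (Set.Iio (psi σ α))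

theorem nadd_def (a b : Ordinal.{u}) : a ♯ b = max (⨆ x : Set.Iio a, Order.succ (x.1 ♯ b))
      (⨆ x : Set.Iio b, Order.succ (a ♯ x.1)) := by
  rw [Ordinal.nadd]

theorem lt_nadd_iff {a b c : Ordinal.{u}} :
    a < b ♯ c ↔ (∃ b' < b, a ≤ b' ♯ c) ∨ ∃ c' < c, a ≤ b ♯ c' := by
  rw [nadd_def, lt_max_iff, Ordinal.lt_iSup_iff, Ordinal.lt_iSup_iff]
  simp only [Order.lt_succ_iff, Subtype.exists, Set.mem_Iio, exists_prop]

theorem nadd_le_iff {a b c : Ordinal.{u}} :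
    b ♯ c ≤ a ↔ (∀ b' < b, b' ♯ c < a) ∧ ∀ c' < c, b ♯ c' < a := by
  rw [← not_lt, lt_nadd_iff]; push_neg; exact Iff.rfl

theorem nadd_lt_nadd_left {b c : Ordinal.{u}} (h : b < c) (a : Ordinal.{u}) : a ♯ b < a ♯ c :=
  lt_nadd_iff.2 (Or.inr ⟨b, h, le_rfl⟩)

theorem nadd_lt_nadd_right {b c : Ordinal.{u}} (h : b < c) (a : Ordinal.{u}) : b ♯ a < c ♯ a :=
  lt_nadd_iff.2 (Or.inl ⟨b, h, le_rfl⟩)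

theorem nadd_le_nadd_left {b c : Ordinal.{u}} (h : b ≤ c) (a : Ordinal.{u}) : a ♯ b ≤ a ♯ c := by
  rcases h.lt_or_eq with h | rfl
  · exact (nadd_lt_nadd_left h a).le
  · exact le_rfl

theorem nadd_le_nadd_right {b c : Ordinal.{u}} (h : b ≤ c) (a : Ordinal.{u}) : b ♯ a ≤ c ♯ a := by
  rcases h.lt_or_eq with h | rfl
  · exact (nadd_lt_nadd_right h a).le
  · exact le_rfl

theorem nadd_le_nadd {a b c d : Ordinal.{u}} (h₁ : a ≤ b) (h₂ : c ≤ d) : a ♯ c ≤ b ♯ d :=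
  (nadd_le_nadd_left h₂ a).trans (nadd_le_nadd_right h₁ d)

theorem nadd_lt_nadd_of_lt_of_le {a b c d : Ordinal.{u}} (h₁ : a < b) (h₂ : c ≤ d) :
    a ♯ c < b ♯ d :=
  (nadd_le_nadd_left h₂ a).trans_lt (nadd_lt_nadd_right h₁ d)

theorem nadd_lt_nadd_of_le_of_lt {a b c d : Ordinal.{u}} (h₁ : a ≤ b) (h₂ : c < d) :
    a ♯ c < b ♯ d :=
  (nadd_lt_nadd_left h₂ a).trans_le (nadd_le_nadd_right h₁ d)

theorem le_nadd_self {a b : Ordinal.{u}} : b ≤ a ♯ b := by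
  induction b using Ordinal.induction with
  | h b IH => exact le_of_forall_lt fun b' hb' => (IH b' hb').trans_lt (nadd_lt_nadd_left hb' a)

theorem nadd_comm (a b : Ordinal.{u}) : a ♯ b = b ♯ a := by
  induction a using Ordinal.induction generalizing b with
  | h a IHa =>
  induction b using Ordinal.induction with
  | h b IHb =>
  apply le_antisymm
  · rw [nadd_le_iff]
    exact ⟨fun a' ha' => (IHa a' ha' b).trans_lt (nadd_lt_nadd_left ha' b),
      fun b' hb' => (IHb b' hb').trans_lt (nadd_lt_nadd_right hb' a)⟩
  · rw [nadd_le_iff]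
    exact ⟨fun b' hb' => (IHb b' hb').symm.trans_lt (nadd_lt_nadd_left hb' a),
      fun a' ha' => (IHa a' ha' b).symm.trans_lt (nadd_lt_nadd_right ha' b)⟩

theorem le_self_nadd {a b : Ordinal.{u}} : a ≤ a ♯ b := nadd_comm b a ▸ le_nadd_self

@[simp]
theorem zero_nadd (a : Ordinal.{u}) : 0 ♯ a = a := by
  induction a using Ordinal.induction with
  | h a IH =>
  apply le_antisymm
  · rw [nadd_le_iff]
    exact ⟨fun a' ha' => absurd ha' not_lt_zero, fun b' hb' => by rw [IH b' hb']; exact hb'⟩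
  · exact le_nadd_self

@[simp]
theorem nadd_zero (a : Ordinal.{u}) : a ♯ 0 = a := by rw [nadd_comm, zero_nadd]

def HFam (α : Ordinal) (X : Set Ordinal) : Set (Set Ordinal) :=
  {Y : Set Ordinal | X ∪ {0, I} ⊆ Y ∧
      (∀ γ ∈ Y, ∀ δ ∈ Y, γ + δ ∈ Y) ∧
      (∀ γ ∈ Y, Ordinal.omega0 ^ γ ∈ Y) ∧
      (∀ γ ∈ Y, Om γ ∈ Y) ∧
      (∀ σ ∈ R, ∀ β ∈ Y, β < α → σ ∈ Y → psiOf (H β) σ ∈ Y)}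

theorem H_eq (α : Ordinal) (X : Set Ordinal) : H α X = ⋂₀ HFam α X := by
  rw [H]; rfl


theorem H_min {α : Ordinal} {X Y : Set Ordinal} (hY : Y ∈ HFam α X) : H α X ⊆ Y := by
  rw [H_eq]; exact sInter_subset_of_mem hY

theorem subset_H (α : Ordinal) (X : Set Ordinal) : X ⊆ H α X := by
  rw [H_eq]; intro x hx Y hY; exact hY.1 (Or.inl hx)

theorem zero_mem_H (α : Ordinal) (X : Set Ordinal) : 0 ∈ H α X := by
  rw [H_eq]; intro Y hY; exact hY.1 (Or.inr (Or.inl rfl))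

theorem I_mem_H (α : Ordinal) (X : Set Ordinal) : I ∈ H α X := by
  rw [H_eq]; intro Y hY; exact hY.1 (Or.inr (Or.inr rfl))

theorem add_mem_H {α : Ordinal} {X : Set Ordinal} {γ δ : Ordinal}
    (hγ : γ ∈ H α X) (hδ : δ ∈ H α X) : γ + δ ∈ H α X := by
  rw [H_eq] at *; intro Y hY; exact hY.2.1 γ (hγ Y hY) δ (hδ Y hY)

theorem opow_mem_H {α : Ordinal} {X : Set Ordinal} {γ : Ordinal}
    (hγ : γ ∈ H α X) : Ordinal.omega0 ^ γ ∈ H α X := by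
  rw [H_eq] at *; intro Y hY; exact hY.2.2.1 γ (hγ Y hY)

theorem Om_mem_H {α : Ordinal} {X : Set Ordinal} {γ : Ordinal}
    (hγ : γ ∈ H α X) : Om γ ∈ H α X := by
  rw [H_eq] at *; intro Y hY; exact hY.2.2.2.1 γ (hγ Y hY)

theorem psi_mem_H {α : Ordinal} {X : Set Ordinal} {σ β : Ordinal} (hσR : σ ∈ R)
    (hβ : β ∈ H α X) (hβα : β < α) (hσ : σ ∈ H α X) : psiOf (H β) σ ∈ H α X := by
  rw [H_eq] at *; intro Y hY; exact hY.2.2.2.2 σ hσR β (hβ Y hY) hβα (hσ Y hY)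

theorem one_mem_H (α : Ordinal) (X : Set Ordinal) : 1 ∈ H α X := by
  simpa using opow_mem_H (zero_mem_H α X)

theorem nat_mem_H (α : Ordinal) (X : Set Ordinal) (n : ℕ) : (n : Ordinal) ∈ H α X := by
  induction n with
  | zero => simpa using zero_mem_H α X
  | succ n ih => push_cast; exact add_mem_H ih (one_mem_H α X)

theorem opow_mul_nat_mem_H {α : Ordinal} {X : Set Ordinal} {e : Ordinal}
    (he : Ordinal.omega0 ^ e ∈ H α X) (n : ℕ) : Ordinal.omega0 ^ e * n ∈ H α X := by
  induction n with
  | zero => simpa using zero_mem_H α X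
  | succ n ih =>
      push_cast
      rw [mul_add, mul_one]
      exact add_mem_H ih he

theorem psiOf_cases (F : Set Ordinal → Set Ordinal) (σ : Ordinal) :
    psiOf F σ = σ ∨ (psiOf F σ < σ ∧ σ ∈ F (Set.Iio (psiOf F σ)) ∧
      F (Set.Iio (psiOf F σ)) ∩ Set.Iio σ ⊆ Set.Iio (psiOf F σ)) := by
  have hne : ({β | β < σ ∧ σ ∈ F (Set.Iio β) ∧ F (Set.Iio β) ∩ Set.Iio σ ⊆ Set.Iio β} ∪ {σ} :
      Set Ordinal).Nonempty := ⟨σ, Or.inr rfl⟩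
  have := csInf_mem hne
  rcases this with h | h
  · exact Or.inr ⟨h.1, h.2.1, h.2.2⟩
  · exact Or.inl h

open Cardinal in
theorem card_opow_le (γ : Ordinal) :
    (Ordinal.omega0 ^ γ).card ≤ max Cardinal.aleph0 γ.card := by
  induction γ using Ordinal.limitRecOn with
  | zero => simp
  | add_one γ ih =>
      rw [← Order.succ_eq_add_one, opow_succ, Ordinal.card_mul, card_omega0]
      calc (Ordinal.omega0 ^ γ).card * ℵ₀ ≤ (max ℵ₀ γ.card) * ℵ₀ :=
            mul_le_mul_left ih _
        _ = max ℵ₀ γ.card := by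
            rw [Cardinal.mul_eq_max (le_max_left _ _) le_rfl]
            simp [max_comm, max_assoc, max_left_comm]
        _ ≤ max ℵ₀ (Order.succ γ).card := by
            exact max_le_max le_rfl (Ordinal.card_le_card (Order.le_succ γ))
  | limit γ hγ ih =>
      calc (Ordinal.omega0 ^ γ).card ≤ max ℵ₀ (max Ordinal.omega0.card γ.card) :=
            Ordinal.card_opow_le _ _
        _ = max ℵ₀ γ.card := by rw [card_omega0, ← max_assoc, max_self]

theorem omega0_opow_lt_ord {κ : Cardinal} (hκ : Cardinal.aleph0 < κ) {γ : Ordinal}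
    (h : γ < κ.ord) : Ordinal.omega0 ^ γ < κ.ord := by
  rw [Cardinal.lt_ord] at h ⊢
  exact (_root_.card_opow_le γ).trans_lt (max_lt hκ h)

theorem omega0_opow_ord {κ : Cardinal} (hκ : Cardinal.aleph0 < κ) :
    Ordinal.omega0 ^ κ.ord = κ.ord := by
  apply le_antisymm
  · exact (opow_le_of_isSuccLimit omega0_ne_zero (Cardinal.isSuccLimit_ord hκ.le)).2
      fun γ hγ => (omega0_opow_lt_ord hκ hγ).le
  · exact right_le_opow _ one_lt_omega0
section Inacc
open Cardinal

theorem kI_spec (hex : ∃ c : Cardinal.{u}, WeaklyInaccessible c) :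
    WeaklyInaccessible (sInf {c : Cardinal.{u} | WeaklyInaccessible c}) := by
  obtain ⟨c, hc⟩ := hex
  exact csInf_mem (s := {c : Cardinal | WeaklyInaccessible c}) ⟨c, hc⟩

theorem aleph0_lt_kI (hex : ∃ c : Cardinal.{u}, WeaklyInaccessible c) :
    ℵ₀ < sInf {c : Cardinal.{u} | WeaklyInaccessible c} := (kI_spec hex).1

theorem aleph_ord_fixed {κ : Cardinal} (hκ : ℵ₀ < κ) (hreg : κ.IsRegular)
    (hlim : ∀ x < κ, Order.succ x < κ) : aleph κ.ord = κ := by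
  obtain ⟨o, rfl⟩ := mem_range_aleph_iff.2 hκ.le
  suffices h : o = (ℵ_ o).ord by conv_lhs => rw [← h]
  have holim : Order.IsSuccLimit o := by
    rcases Ordinal.zero_or_succ_or_isSuccLimit o with rfl | ⟨a, rfl⟩ | h
    · simp only [aleph_zero, lt_irrefl] at hκ
    · rw [aleph_succ] at hlim
      exact absurd (hlim (ℵ_ a) (by rw [← aleph_succ]; exact (aleph_lt_aleph.2 (Order.lt_succ a))))
        (lt_irrefl _)
    · exact h
  have h1 : o ≤ (ℵ_ o).ord := by rw [ord_aleph]; exact isNormal_omega.strictMono.le_apply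
  rcases h1.lt_or_eq with h2 | h2
  · exfalso
    have hcof : (ℵ_ o).ord.cof = o.cof := by rw [ord_aleph]; exact cof_omega holim
    have : (ℵ_ o) = o.cof := by rw [← hreg.cof_eq, hcof]
    have hle : (ℵ_ o) ≤ o.card := this ▸ Ordinal.cof_le_card o
    have : o.card < ℵ_ o := Cardinal.lt_ord.1 h2
    exact absurd (hle.trans_lt this) (lt_irrefl _)
  · exact h2

theorem Om_I (hex : ∃ c : Cardinal.{u}, WeaklyInaccessible c) : Om I.{u} = I.{u} := by
  have hs := kI_spec hex
  have h0 : I ≠ 0 := by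
    have : (0 : Ordinal) < I := by
      rw [I, ← Cardinal.ord_zero]
      exact Cardinal.ord_lt_ord.2 (lt_of_lt_of_le Cardinal.aleph0_pos hs.1.le)
    exact this.ne'
  rw [Om, if_neg h0, I, aleph_ord_fixed hs.1 hs.2.1 hs.2.2]

end Inacc

section OmFacts
open Cardinal

theorem Om_zero : Om 0 = 0 := if_pos rfl

theorem Om_eq {γ : Ordinal} (h : γ ≠ 0) : Om γ = (ℵ_ γ).ord := if_neg h

theorem Om_pos {γ : Ordinal} (h : γ ≠ 0) : 0 < Om γ := by
  rw [Om_eq h, ← Cardinal.ord_zero]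
  exact Cardinal.ord_lt_ord.2 (lt_of_lt_of_le Cardinal.aleph0_pos (aleph0_le_aleph γ))

theorem aleph0_lt_aleph {γ : Ordinal} (h : γ ≠ 0) : ℵ₀ < ℵ_ γ := by
  rw [← aleph_zero]
  exact aleph_lt_aleph.2 (pos_iff_ne_zero.2 h)

theorem self_le_Om (γ : Ordinal) : γ ≤ Om γ := by
  rcases eq_or_ne γ 0 with rfl | h
  · simp [Om_zero]
  · rw [Om_eq h]; exact by rw [ord_aleph]; exact isNormal_omega.strictMono.le_apply

theorem Om_inj {γ δ : Ordinal} (h : Om γ = Om δ) : γ = δ := by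
  rcases eq_or_ne γ 0 with rfl | hγ
  · rcases eq_or_ne δ 0 with rfl | hδ
    · rfl
    · rw [Om_zero] at h; exact absurd (h ▸ Om_pos hδ) (lt_irrefl _)
  · rcases eq_or_ne δ 0 with rfl | hδ
    · rw [Om_zero] at h; exact absurd (h.symm ▸ Om_pos hγ) (lt_irrefl _)
    · rw [Om_eq hγ, Om_eq hδ] at h
      exact le_antisymm (aleph_le_aleph.1 (Cardinal.ord_le_ord.1 h.le))
        (aleph_le_aleph.1 (Cardinal.ord_le_ord.1 h.ge))

theorem Om_eps {γ : Ordinal} (h : γ ≠ 0) : Ordinal.omega0 ^ Om γ = Om γ := by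
  rw [Om_eq h]; exact omega0_opow_ord (aleph0_lt_aleph h)

theorem Om_isLimit {γ : Ordinal} (h : γ ≠ 0) : Order.IsSuccLimit (Om γ) := by
  rw [Om_eq h]; exact isSuccLimit_ord (aleph0_le_aleph γ)

theorem Om_principal {γ : Ordinal} (h : γ ≠ 0) :
    Ordinal.Principal (· + ·) (Om γ) := by
  rw [Om_eq h]; exact isPrincipal_add_ord (aleph0_le_aleph γ)

theorem I_ne_zero (hex : ∃ c : Cardinal.{u}, WeaklyInaccessible c) : I.{u} ≠ 0 := by
  have hs := kI_spec hex
  have : (0 : Ordinal) < I := by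
    rw [I, ← Cardinal.ord_zero]
    exact Cardinal.ord_lt_ord.2 (lt_of_lt_of_le Cardinal.aleph0_pos hs.1.le)
  exact this.ne'

theorem I_eps (hex : ∃ c : Cardinal.{u}, WeaklyInaccessible c) :
    Ordinal.omega0 ^ I.{u} = I.{u} := by
  conv_lhs => rw [← Om_I hex]
  rw [Om_eps (I_ne_zero hex), Om_I hex]

theorem I_isLimit (hex : ∃ c : Cardinal.{u}, WeaklyInaccessible c) : Order.IsSuccLimit I.{u} := by
  rw [← Om_I hex]; exact Om_isLimit (I_ne_zero hex)
end OmFacts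


theorem I_cases : I.{u} = 0 ∨ (Ordinal.omega0 ^ I.{u} = I.{u} ∧ Om I.{u} = I.{u} ∧ I.{u} ≠ 0) := by
  by_cases h : ∃ c : Cardinal.{u}, WeaklyInaccessible c
  · exact Or.inr ⟨I_eps.{u} h, Om_I.{u} h, I_ne_zero.{u} h⟩
  · left
    have : {c : Cardinal | WeaklyInaccessible c} = ∅ := by
      ext c; simp only [Set.mem_setOf_eq, Set.mem_empty_iff_false, iff_false]
      exact fun hc => h ⟨c, hc⟩
    rw [I, this, Cardinal.sInf_empty]
    exact Cardinal.ord_zero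

section ML

theorem omega0_opow_pos (c : Ordinal) : 0 < Ordinal.omega0 ^ c := opow_pos c omega0_pos

theorem decomp {c : Ordinal} {m : ℕ} {a x : Ordinal} (ha : a < Ordinal.omega0 ^ c)
    (hx : x < Ordinal.omega0 ^ c * m + a) :
    ∃ (k : ℕ) (x₀ : Ordinal), x₀ < Ordinal.omega0 ^ c ∧ x = Ordinal.omega0 ^ c * k + x₀ ∧
      (k < m ∨ (k = m ∧ x₀ < a)) := by
  have hc0 : (Ordinal.omega0 ^ c) ≠ 0 := (omega0_opow_pos c).ne'
  have hx' : x < Ordinal.omega0 ^ c * ((m : Ordinal) + 1) := by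
    refine hx.trans_le (le_trans (add_le_add_right ha.le _) ?_)
    rw [mul_add, mul_one]
  have hdiv : x / Ordinal.omega0 ^ c < ((m : Ordinal) + 1) := (Ordinal.div_lt hc0).2 hx'
  have hltom : x / Ordinal.omega0 ^ c < Ordinal.omega0 :=
    hdiv.trans (by exact_mod_cast nat_lt_omega0 (m + 1))
  obtain ⟨k, hk⟩ := Ordinal.lt_omega0.1 hltom
  have hkm : k ≤ m := by
    rw [hk] at hdiv
    have : (k : Ordinal) < (m : Ordinal) + 1 := hdiv
    have h2 : k < m + 1 := by exact_mod_cast (by push_cast; exact this : (k : Ordinal) < ((m + 1 : ℕ) : Ordinal))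
    omega
  refine ⟨k, x % Ordinal.omega0 ^ c, Ordinal.mod_lt x hc0, ?_, ?_⟩
  · rw [← hk, Ordinal.div_add_mod]
  · rcases hkm.lt_or_eq with h | rfl
    · exact Or.inl h
    · refine Or.inr ⟨rfl, ?_⟩
      have hxeq : x = Ordinal.omega0 ^ c * k + x % Ordinal.omega0 ^ c := by
        rw [← hk, Ordinal.div_add_mod]
      rw [hxeq] at hx
      exact (add_lt_add_iff_left _).1 hx

/-- Merge property -/
def MergeP (A B : Ordinal) : Prop :=
  ∀ (c : Ordinal) (m n : ℕ) (a b : Ordinal), a < Ordinal.omega0 ^ c → b < Ordinal.omega0 ^ c →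
    A = Ordinal.omega0 ^ c * m + a → B = Ordinal.omega0 ^ c * n + b →
    A ♯ B = Ordinal.omega0 ^ c * (m + n : ℕ) + (a ♯ b)

/-- Closure property -/
def ClosP (A B : Ordinal) : Prop :=
  ∀ e : Ordinal, A < Ordinal.omega0 ^ e → B < Ordinal.omega0 ^ e → A ♯ B < Ordinal.omega0 ^ e

theorem ML : ∀ (γ A B : Ordinal), A ♯ B = γ → MergeP A B ∧ ClosP A B := by
  intro γ
  induction γ using Ordinal.induction with
  | h γ IH =>
  intro A B hγ
  have IHm : ∀ A' B', A' ♯ B' < γ → MergeP A' B' := fun A' B' h => (IH _ h A' B' rfl).1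
  have IHc : ∀ A' B', A' ♯ B' < γ → ClosP A' B' := fun A' B' h => (IH _ h A' B' rfl).2
  subst hγ
  have merge : MergeP A B := by
    intro c m n a b ha hb hA hB
    apply le_antisymm
    · rw [nadd_le_iff]
      constructor
      · -- ∀ x < A, x ♯ B < T
        intro x hx
        obtain ⟨k, x₀, hx₀, rfl, hcase⟩ := decomp ha (hA ▸ hx)
        have hmeas : (Ordinal.omega0 ^ c * k + x₀) ♯ B < A ♯ B := nadd_lt_nadd_right hx B
        have hxB := IHm _ _ hmeas c k n x₀ b hx₀ hb rfl hB
        rw [hxB]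
        rcases hcase with h | ⟨rfl, h⟩
        · have hx₀b : x₀ ♯ b < Ordinal.omega0 ^ c := by
            refine IHc x₀ b ?_ c hx₀ hb
            have hbB : b ≤ B := hB ▸ le_add_self
            exact (nadd_le_nadd (le_add_self) hbB).trans_lt hmeas
          calc Ordinal.omega0 ^ c * (k + n : ℕ) + (x₀ ♯ b)
              < Ordinal.omega0 ^ c * (k + n : ℕ) + Ordinal.omega0 ^ c := add_lt_add_right hx₀b _
            _ = Ordinal.omega0 ^ c * ((k + n : ℕ) + 1) := by rw [mul_add, mul_one]
            _ ≤ Ordinal.omega0 ^ c * (m + n : ℕ) := by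
                refine mul_le_mul_right ?_ _
                have : (k + n + 1 : ℕ) ≤ (m + n : ℕ) := by omega
                exact_mod_cast Nat.cast_le.2 this
            _ ≤ Ordinal.omega0 ^ c * (m + n : ℕ) + (a ♯ b) := le_self_add
        · exact add_lt_add_right (nadd_lt_nadd_right h b) _
      · -- ∀ y < B, A ♯ y < T
        intro y hy
        obtain ⟨k, y₀, hy₀, rfl, hcase⟩ := decomp hb (hB ▸ hy)
        have hmeas : A ♯ (Ordinal.omega0 ^ c * k + y₀) < A ♯ B := nadd_lt_nadd_left hy A
        have hAy := IHm _ _ hmeas c m k a y₀ ha hy₀ hA rfl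
        rw [hAy]
        rcases hcase with h | ⟨rfl, h⟩
        · have hay : a ♯ y₀ < Ordinal.omega0 ^ c := by
            refine IHc a y₀ ?_ c ha hy₀
            have haA : a ≤ A := hA ▸ le_add_self
            exact (nadd_le_nadd haA (le_add_self)).trans_lt hmeas
          calc Ordinal.omega0 ^ c * (m + k : ℕ) + (a ♯ y₀)
              < Ordinal.omega0 ^ c * (m + k : ℕ) + Ordinal.omega0 ^ c := add_lt_add_right hay _
            _ = Ordinal.omega0 ^ c * ((m + k : ℕ) + 1) := by rw [mul_add, mul_one]
            _ ≤ Ordinal.omega0 ^ c * (m + n : ℕ) := by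
                refine mul_le_mul_right ?_ _
                have : (m + k + 1 : ℕ) ≤ (m + n : ℕ) := by omega
                exact_mod_cast Nat.cast_le.2 this
            _ ≤ Ordinal.omega0 ^ c * (m + n : ℕ) + (a ♯ b) := le_self_add
        · exact add_lt_add_right (nadd_lt_nadd_left h a) _
    · -- T ≤ A ♯ B
      have main : ∀ z < Ordinal.omega0 ^ c * (m + n : ℕ) + (a ♯ b), z < A ♯ B := by
        have step : ∀ (p q : ℕ) (u v A' B' : Ordinal), u < Ordinal.omega0 ^ c →
            v < Ordinal.omega0 ^ c → A' = Ordinal.omega0 ^ c * p + u →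
            B' = Ordinal.omega0 ^ c * q + v → 0 < p → A' ♯ B' = A ♯ B →
            ∀ z < Ordinal.omega0 ^ c * (p + q : ℕ), z < A ♯ B := by
          intro p q u v A' B' hu hv hA' hB' hp hEq z hz
          obtain ⟨k, z₀, hz₀, rfl, hcase⟩ := decomp (omega0_opow_pos c)
            (by rw [add_zero]; exact hz)
          have hk : k ≤ p + q - 1 := by
            rcases hcase with h | ⟨rfl, h⟩
            · omega
            · exact absurd h not_lt_zero
          set x : Ordinal := Ordinal.omega0 ^ c * (p - 1 : ℕ) + z₀ with hxdef
          have hxA' : x < A' := by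
            rw [hA']
            calc x < Ordinal.omega0 ^ c * (p - 1 : ℕ) + Ordinal.omega0 ^ c :=
                  add_lt_add_right hz₀ _
              _ = Ordinal.omega0 ^ c * ((p - 1 : ℕ) + 1) := by rw [mul_add, mul_one]
              _ = Ordinal.omega0 ^ c * (p : ℕ) := by
                  norm_cast
                  rw [Nat.sub_add_cancel hp]
              _ ≤ Ordinal.omega0 ^ c * (p : ℕ) + u := le_self_add
          have hmeas : x ♯ B' < A ♯ B := by
            rw [← hEq]; exact nadd_lt_nadd_right hxA' B'
          have hxB := IHm _ _ hmeas c (p - 1) q z₀ v hz₀ hv rfl hB'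
          have : Ordinal.omega0 ^ c * k + z₀ ≤ x ♯ B' := by
            rw [hxB]
            calc Ordinal.omega0 ^ c * k + z₀
                ≤ Ordinal.omega0 ^ c * ((p - 1) + q : ℕ) + z₀ := by
                  refine add_le_add_left (mul_le_mul_right ?_ _) _
                  exact_mod_cast Nat.cast_le.2 (by omega : k ≤ p - 1 + q)
              _ ≤ Ordinal.omega0 ^ c * ((p - 1) + q : ℕ) + (z₀ ♯ v) :=
                  add_le_add_right le_self_nadd _
          exact this.trans_lt hmeas
        intro z hz
        rcases lt_or_ge z (Ordinal.omega0 ^ c * (m + n : ℕ)) with h | h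
        · rcases Nat.eq_zero_or_pos m with rfl | hm
          · rcases Nat.eq_zero_or_pos n with rfl | hn
            · simp only [Nat.add_zero, Nat.cast_zero, mul_zero] at h
              exact absurd h not_lt_zero
            · have hcomm : B ♯ A = A ♯ B := nadd_comm B A
              have : (n + 0 : ℕ) = (0 + n : ℕ) := by omega
              exact step n 0 b a B A hb ha hB hA hn hcomm z (by rwa [this])
          · exact step m n a b A B ha hb hA hB hm rfl z h
        · obtain ⟨w, rfl⟩ : ∃ w, z = Ordinal.omega0 ^ c * (m + n : ℕ) + w :=
            ⟨z - Ordinal.omega0 ^ c * (m + n : ℕ), (Ordinal.add_sub_cancel_of_le h).symm⟩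
          have hw : w < a ♯ b := (add_lt_add_iff_left _).1 hz
          rcases lt_nadd_iff.1 hw with ⟨a', ha', hle⟩ | ⟨b', hb', hle⟩
          · have hxA : Ordinal.omega0 ^ c * m + a' < A := hA ▸ add_lt_add_right ha' _
            have hmeas : (Ordinal.omega0 ^ c * m + a') ♯ B < A ♯ B := nadd_lt_nadd_right hxA B
            have hxB := IHm _ _ hmeas c m n a' b (ha'.trans ha) hb rfl hB
            refine lt_of_le_of_lt ?_ hmeas
            rw [hxB]
            exact add_le_add_right hle _
          · have hyB : Ordinal.omega0 ^ c * n + b' < B := hB ▸ add_lt_add_right hb' _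
            have hmeas : A ♯ (Ordinal.omega0 ^ c * n + b') < A ♯ B := nadd_lt_nadd_left hyB A
            have hAy := IHm _ _ hmeas c m n a b' ha (hb'.trans hb) hA rfl
            refine lt_of_le_of_lt ?_ hmeas
            rw [hAy]
            exact add_le_add_right hle _
      exact le_of_not_gt fun hcon => (main _ hcon).false
  refine ⟨merge, ?_⟩
  -- Closure
  intro e hAe hBe
  rcases eq_or_ne A 0 with rfl | hA0
  · rwa [zero_nadd]
  rcases eq_or_ne B 0 with rfl | hB0
  · rwa [nadd_zero]
  set d : Ordinal := max (log Ordinal.omega0 A) (log Ordinal.omega0 B) with hd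
  have hde : d < e := by
    rw [hd, max_lt_iff]
    exact ⟨(lt_opow_iff_log_lt one_lt_omega0 hA0).1 hAe,
      (lt_opow_iff_log_lt one_lt_omega0 hB0).1 hBe⟩
  have hdc0 : (Ordinal.omega0 ^ d) ≠ 0 := (omega0_opow_pos d).ne'
  have hA1 : A < Ordinal.omega0 ^ d * Ordinal.omega0 := by
    rw [← opow_succ]
    exact (lt_opow_succ_log_self one_lt_omega0 A).trans_le
      (opow_le_opow_right omega0_pos (Order.succ_le_succ (le_max_left _ _)))
  have hB1 : B < Ordinal.omega0 ^ d * Ordinal.omega0 := by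
    rw [← opow_succ]
    exact (lt_opow_succ_log_self one_lt_omega0 B).trans_le
      (opow_le_opow_right omega0_pos (Order.succ_le_succ (le_max_right _ _)))
  obtain ⟨m, hm⟩ := Ordinal.lt_omega0.1 ((Ordinal.div_lt hdc0).2 hA1)
  obtain ⟨n, hn⟩ := Ordinal.lt_omega0.1 ((Ordinal.div_lt hdc0).2 hB1)
  have hAeq : A = Ordinal.omega0 ^ d * m + A % Ordinal.omega0 ^ d := by
    rw [← hm, Ordinal.div_add_mod]
  have hBeq : B = Ordinal.omega0 ^ d * n + B % Ordinal.omega0 ^ d := by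
    rw [← hn, Ordinal.div_add_mod]
  have har : A % Ordinal.omega0 ^ d < Ordinal.omega0 ^ d := Ordinal.mod_lt A hdc0
  have hbr : B % Ordinal.omega0 ^ d < Ordinal.omega0 ^ d := Ordinal.mod_lt B hdc0
  have hmerge := merge d m n _ _ har hbr hAeq hBeq
  have hab : (A % Ordinal.omega0 ^ d) ♯ (B % Ordinal.omega0 ^ d) < Ordinal.omega0 ^ d := by
    refine IHc _ _ ?_ d har hbr
    rcases max_cases (log Ordinal.omega0 A) (log Ordinal.omega0 B) with ⟨hmax, _⟩ | ⟨hmax, _⟩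
    · have : A % Ordinal.omega0 ^ d < A := har.trans_le (by rw [hd, hmax]; exact opow_log_le_self _ hA0)
      exact nadd_lt_nadd_of_lt_of_le this (Ordinal.mod_le B _)
    · have : B % Ordinal.omega0 ^ d < B := hbr.trans_le (by rw [hd, hmax]; exact opow_log_le_self _ hB0)
      exact nadd_lt_nadd_of_le_of_lt (Ordinal.mod_le A _) this
  calc A ♯ B = Ordinal.omega0 ^ d * (m + n : ℕ) + ((A % Ordinal.omega0 ^ d) ♯ (B % Ordinal.omega0 ^ d)) := hmerge
    _ < Ordinal.omega0 ^ d * (m + n : ℕ) + Ordinal.omega0 ^ d := add_lt_add_right hab _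
    _ = Ordinal.omega0 ^ d * ((m + n : ℕ) + 1) := by rw [mul_add, mul_one]
    _ ≤ Ordinal.omega0 ^ d * Ordinal.omega0 := by
        refine mul_le_mul_right ?_ _
        exact_mod_cast (nat_lt_omega0 (m + n + 1)).le
    _ = Ordinal.omega0 ^ Order.succ d := (opow_succ _ _).symm
    _ ≤ Ordinal.omega0 ^ e := opow_le_opow_right omega0_pos (Order.succ_le_of_lt hde)

theorem nadd_merge {A B : Ordinal} : MergeP A B := (ML _ A B rfl).1

theorem nadd_lt_omega0_opow {A B e : Ordinal} (hA : A < Ordinal.omega0 ^ e)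
    (hB : B < Ordinal.omega0 ^ e) : A ♯ B < Ordinal.omega0 ^ e := (ML _ A B rfl).2 e hA hB

end ML

section Exps

/-- The set of Cantor normal form exponents of an ordinal. -/
def exps (o : Ordinal) : Set Ordinal :=
  if h : o = 0 then ∅
  else insert (Ordinal.log Ordinal.omega0 o)
    (exps (o % Ordinal.omega0 ^ Ordinal.log Ordinal.omega0 o))
termination_by o
decreasing_by
  exact lt_of_lt_of_le (Ordinal.mod_lt o (omega0_opow_pos _).ne')
    (Ordinal.opow_log_le_self _ h)

theorem exps_zero : exps 0 = ∅ := by rw [exps]; simp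

theorem exps_ne {o : Ordinal} (h : o ≠ 0) : exps o =
    insert (Ordinal.log Ordinal.omega0 o)
      (exps (o % Ordinal.omega0 ^ Ordinal.log Ordinal.omega0 o)) := by
  rw [exps]; simp [h]

theorem exps_le {o : Ordinal} : ∀ e ∈ exps o, e ≤ o := by
  induction o using Ordinal.induction with
  | h o IH =>
    intro e he
    rcases eq_or_ne o 0 with rfl | h0
    · rw [exps_zero] at he; exact absurd he (Set.notMem_empty e)
    · rw [exps_ne h0] at he
      rcases Set.mem_insert_iff.1 he with rfl | he
      · exact Ordinal.log_le_self _ _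
      · have hro : o % Ordinal.omega0 ^ Ordinal.log Ordinal.omega0 o < o :=
          lt_of_lt_of_le (Ordinal.mod_lt o (omega0_opow_pos _).ne')
            (Ordinal.opow_log_le_self _ h0)
        exact (IH _ hro e he).trans hro.le

theorem exps_eq {d q r : Ordinal} (hq : q ≠ 0) (hqω : q < Ordinal.omega0)
    (hr : r < Ordinal.omega0 ^ d) :
    exps (Ordinal.omega0 ^ d * q + r) = insert d (exps r) := by
  set x := Ordinal.omega0 ^ d * q + r with hx
  have hx0 : x ≠ 0 := by
    have h1 : Ordinal.omega0 ^ d ≤ x := by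
      calc Ordinal.omega0 ^ d = Ordinal.omega0 ^ d * 1 := (mul_one _).symm
        _ ≤ Ordinal.omega0 ^ d * q := mul_le_mul_right (Ordinal.one_le_iff_ne_zero.2 hq) _
        _ ≤ x := le_self_add
    exact ((omega0_opow_pos d).trans_le h1).ne'
  have hlog : Ordinal.log Ordinal.omega0 x = d := by
    apply le_antisymm
    · have hlt : x < Ordinal.omega0 ^ Order.succ d := by
        rw [opow_succ]
        calc x < Ordinal.omega0 ^ d * q + Ordinal.omega0 ^ d := add_lt_add_right hr _
          _ = Ordinal.omega0 ^ d * (q + 1) := by rw [mul_add, mul_one]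
          _ ≤ Ordinal.omega0 ^ d * Ordinal.omega0 :=
              mul_le_mul_right (isSuccLimit_omega0.succ_lt hqω).le _
      have := (lt_opow_iff_log_lt one_lt_omega0 hx0).1 hlt
      exact Order.lt_succ_iff.1 this
    · have : Ordinal.omega0 ^ d ≤ x := by
        refine (le_self_add : _ ≤ _ + r).trans' ?_
        exact (mul_le_mul_right (Ordinal.one_le_iff_ne_zero.2 hq) _).trans_eq' (mul_one _)
      simpa [Ordinal.log_opow one_lt_omega0] using Ordinal.log_mono_right Ordinal.omega0 this
  have hmod : x % Ordinal.omega0 ^ d = r := by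
    rw [hx, Ordinal.mul_add_mod_self, Ordinal.mod_eq_of_lt hr]
  rw [exps_ne hx0, hlog, hmod]

theorem exps_opow (e : Ordinal) : exps (Ordinal.omega0 ^ e) = {e} := by
  have := exps_eq (d := e) (r := 0) one_ne_zero one_lt_omega0 (omega0_opow_pos e)
  rw [mul_one, add_zero] at this
  rw [this, exps_zero]
  simp

theorem exps_natmul {d : Ordinal} {q : ℕ} (hq : q ≠ 0) :
    exps (Ordinal.omega0 ^ d * q) = {d} := by
  have := exps_eq (d := d) (q := q) (r := 0) (by exact_mod_cast hq) (nat_lt_omega0 q)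
    (omega0_opow_pos d)
  rw [add_zero] at this
  rw [this, exps_zero]
  simp

theorem exps_add : ∀ x y : Ordinal, exps (x + y) ⊆ exps x ∪ exps y := by
  intro x
  induction x using Ordinal.induction with
  | h x IH =>
    intro y e he
    rcases eq_or_ne x 0 with rfl | hx0
    · rw [zero_add] at he; exact Or.inr he
    rcases eq_or_ne y 0 with rfl | hy0
    · rw [add_zero] at he; exact Or.inl he
    by_cases habs : x < Ordinal.omega0 ^ Ordinal.log Ordinal.omega0 y
    · rw [Ordinal.add_absorp habs (Ordinal.opow_log_le_self _ hy0)] at he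
      exact Or.inr he
    set d := Ordinal.log Ordinal.omega0 x with hd
    have hdy : Ordinal.log Ordinal.omega0 y ≤ d := by
      rw [hd]
      have h1 : Ordinal.omega0 ^ Ordinal.log Ordinal.omega0 y ≤ x := le_of_not_gt habs
      simpa [Ordinal.log_opow one_lt_omega0] using Ordinal.log_mono_right Ordinal.omega0 h1
    have hdc0 : (Ordinal.omega0 ^ d) ≠ 0 := (omega0_opow_pos d).ne'
    have hxlt : x < Ordinal.omega0 ^ d * Ordinal.omega0 := by
      rw [← opow_succ]
      exact lt_opow_succ_log_self one_lt_omega0 x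
    have hylt : y < Ordinal.omega0 ^ d * Ordinal.omega0 := by
      rw [← opow_succ]
      exact (lt_opow_succ_log_self one_lt_omega0 y).trans_le
        (opow_le_opow_right omega0_pos (Order.succ_le_succ hdy))
    obtain ⟨c, hc⟩ := Ordinal.lt_omega0.1 ((Ordinal.div_lt hdc0).2 hxlt)
    have hc1 : c ≠ 0 := by
      intro h
      rw [h] at hc
      have := Ordinal.opow_log_le_self Ordinal.omega0 hx0
      rw [← hd] at this
      have h2 : (1 : Ordinal) ≤ x / Ordinal.omega0 ^ d := (Ordinal.le_div hdc0).2 (by rwa [mul_one])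
      rw [hc] at h2
      simp at h2
    have hxeq : x = Ordinal.omega0 ^ d * c + x % Ordinal.omega0 ^ d := by
      rw [← hc, Ordinal.div_add_mod]
    have hr : x % Ordinal.omega0 ^ d < Ordinal.omega0 ^ d := Ordinal.mod_lt x hdc0
    have hexpsx : exps x = insert d (exps (x % Ordinal.omega0 ^ d)) := by
      conv_lhs => rw [hxeq]
      exact exps_eq (by exact_mod_cast hc1) (nat_lt_omega0 c) hr
    rcases lt_or_eq_of_le hdy with hdylt | hdyeq
    · -- y < ω ^ d
      have hylt' : y < Ordinal.omega0 ^ d :=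
        (lt_opow_succ_log_self one_lt_omega0 y).trans_le
          (opow_le_opow_right omega0_pos (Order.succ_le_of_lt hdylt))
      have hsum : x + y = Ordinal.omega0 ^ d * c + (x % Ordinal.omega0 ^ d + y) := by
        conv_lhs => rw [hxeq]
        rw [add_assoc]
      have hw : x % Ordinal.omega0 ^ d + y < Ordinal.omega0 ^ d :=
        isPrincipal_add_omega0_opow d hr hylt'
      rw [hsum, exps_eq (by exact_mod_cast hc1) (nat_lt_omega0 c) hw] at he
      rcases Set.mem_insert_iff.1 he with rfl | he
      · exact Or.inl (hexpsx ▸ Set.mem_insert _ _)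
      · rcases IH _ (hr.trans_le (Ordinal.opow_log_le_self _ hx0)) y he with h | h
        · exact Or.inl (hexpsx ▸ Set.mem_insert_of_mem _ h)
        · exact Or.inr h
    · -- log y = d
      obtain ⟨c₂, hc₂⟩ := Ordinal.lt_omega0.1 ((Ordinal.div_lt hdc0).2 hylt)
      have hyc1 : c₂ ≠ 0 := by
        intro h
        rw [h] at hc₂
        have := Ordinal.opow_log_le_self Ordinal.omega0 hy0
        rw [hdyeq] at this
        have h2 : (1 : Ordinal) ≤ y / Ordinal.omega0 ^ d := (Ordinal.le_div hdc0).2 (by rwa [mul_one])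
        rw [hc₂] at h2
        simp at h2
      have hyeq : y = Ordinal.omega0 ^ d * c₂ + y % Ordinal.omega0 ^ d := by
        rw [← hc₂, Ordinal.div_add_mod]
      have hry : y % Ordinal.omega0 ^ d < Ordinal.omega0 ^ d := Ordinal.mod_lt y hdc0
      have hexpsy : exps y = insert d (exps (y % Ordinal.omega0 ^ d)) := by
        conv_lhs => rw [hyeq]
        exact exps_eq (by exact_mod_cast hyc1) (nat_lt_omega0 c₂) hry
      have habs2 : x % Ordinal.omega0 ^ d + Ordinal.omega0 ^ d * c₂ = Ordinal.omega0 ^ d * c₂ :=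
        Ordinal.add_absorp hr (by
          calc Ordinal.omega0 ^ d = Ordinal.omega0 ^ d * 1 := (mul_one _).symm
            _ ≤ Ordinal.omega0 ^ d * c₂ := mul_le_mul_right (Ordinal.one_le_iff_ne_zero.2
                (by exact_mod_cast hyc1)) _)
      have hsum : x + y = Ordinal.omega0 ^ d * ((c : Ordinal) + c₂) + y % Ordinal.omega0 ^ d := by
        conv_lhs => rw [hxeq, hyeq]
        rw [add_assoc, ← add_assoc (x % Ordinal.omega0 ^ d), habs2, ← add_assoc, ← mul_add]
      have hcc : ((c : Ordinal) + c₂) = ((c + c₂ : ℕ) : Ordinal) := by push_cast; rfl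
      rw [hsum, hcc, exps_eq (by exact_mod_cast (by omega : c + c₂ ≠ 0))
        (nat_lt_omega0 _) hry] at he
      rcases Set.mem_insert_iff.1 he with rfl | he
      · exact Or.inl (hexpsx ▸ Set.mem_insert _ _)
      · exact Or.inr (hexpsy ▸ Set.mem_insert_of_mem _ he)

end Exps

section Split

theorem split_at (d x : Ordinal) (hlt : x < Ordinal.omega0 ^ d * Ordinal.omega0) :
    ∃ (m : ℕ) (a : Ordinal), a < Ordinal.omega0 ^ d ∧ x = Ordinal.omega0 ^ d * m + a ∧
      a ≤ x ∧ (Ordinal.omega0 ^ d ≤ x → (m ≠ 0 ∧ a < x)) ∧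
      (x < Ordinal.omega0 ^ d → (m = 0 ∧ a = x)) := by
  have hdc0 : (Ordinal.omega0 ^ d) ≠ 0 := (omega0_opow_pos d).ne'
  obtain ⟨m, hm⟩ := Ordinal.lt_omega0.1 ((Ordinal.div_lt hdc0).2 hlt)
  refine ⟨m, x % Ordinal.omega0 ^ d, Ordinal.mod_lt x hdc0, by rw [← hm, Ordinal.div_add_mod],
    Ordinal.mod_le x _, fun hle => ⟨?_, ?_⟩, fun hgt => ⟨?_, ?_⟩⟩
  · intro h
    have h2 : (1 : Ordinal) ≤ x / Ordinal.omega0 ^ d := (Ordinal.le_div hdc0).2 (by rwa [mul_one])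
    rw [hm] at h2
    exact absurd h2 (by simp [h])
  · exact (Ordinal.mod_lt x hdc0).trans_le hle
  · have := Ordinal.div_eq_zero_of_lt hgt
    rw [hm] at this
    exact_mod_cast this
  · exact Ordinal.mod_eq_of_lt hgt

theorem exps_nadd : ∀ x y : Ordinal, exps (x ♯ y) = exps x ∪ exps y := by
  suffices h : ∀ γ x y : Ordinal, x ♯ y = γ → exps (x ♯ y) = exps x ∪ exps y by
    intro x y; exact h _ x y rfl
  intro γ
  induction γ using Ordinal.induction with
  | h γ IH =>
  intro x y hγ
  subst hγ
  rcases eq_or_ne x 0 with rfl | hx0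
  · simp [exps_zero]
  rcases eq_or_ne y 0 with rfl | hy0
  · simp [exps_zero]
  set d : Ordinal := max (Ordinal.log Ordinal.omega0 x) (Ordinal.log Ordinal.omega0 y) with hd
  have hxlt : x < Ordinal.omega0 ^ d * Ordinal.omega0 := by
    rw [← opow_succ]
    exact (lt_opow_succ_log_self one_lt_omega0 x).trans_le
      (opow_le_opow_right omega0_pos (Order.succ_le_succ (le_max_left _ _)))
  have hylt : y < Ordinal.omega0 ^ d * Ordinal.omega0 := by
    rw [← opow_succ]
    exact (lt_opow_succ_log_self one_lt_omega0 y).trans_le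
      (opow_le_opow_right omega0_pos (Order.succ_le_succ (le_max_right _ _)))
  obtain ⟨m, a, ha, hxeq, hax, hxbig, hxsmall⟩ := split_at d x hxlt
  obtain ⟨n, b, hb, hyeq, hby, hybig, hysmall⟩ := split_at d y hylt
  have hmerge : x ♯ y = Ordinal.omega0 ^ d * (m + n : ℕ) + (a ♯ b) :=
    nadd_merge d m n a b ha hb hxeq hyeq
  have hab : a ♯ b < Ordinal.omega0 ^ d := nadd_lt_omega0_opow ha hb
  have hstrict : a ♯ b < x ♯ y := by
    rcases max_cases (Ordinal.log Ordinal.omega0 x) (Ordinal.log Ordinal.omega0 y) with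
      ⟨hmax, _⟩ | ⟨hmax, _⟩
    · have hdx : Ordinal.omega0 ^ d ≤ x := by
        rw [hd, hmax]; exact Ordinal.opow_log_le_self _ hx0
      exact nadd_lt_nadd_of_lt_of_le (hxbig hdx).2 hby
    · have hdy : Ordinal.omega0 ^ d ≤ y := by
        rw [hd, hmax]; exact Ordinal.opow_log_le_self _ hy0
      exact nadd_lt_nadd_of_le_of_lt hax (hybig hdy).2
  have hIH : exps (a ♯ b) = exps a ∪ exps b := IH _ hstrict a b rfl
  have hmn : m + n ≠ 0 := by
    rcases max_cases (Ordinal.log Ordinal.omega0 x) (Ordinal.log Ordinal.omega0 y) with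
      ⟨hmax, _⟩ | ⟨hmax, _⟩
    · have hdx : Ordinal.omega0 ^ d ≤ x := by
        rw [hd, hmax]; exact Ordinal.opow_log_le_self _ hx0
      have := (hxbig hdx).1; omega
    · have hdy : Ordinal.omega0 ^ d ≤ y := by
        rw [hd, hmax]; exact Ordinal.opow_log_le_self _ hy0
      have := (hybig hdy).1; omega
  have hmain : exps (x ♯ y) = insert d (exps a ∪ exps b) := by
    rw [hmerge, exps_eq (by exact_mod_cast hmn) (nat_lt_omega0 _) hab, hIH]
  rcases eq_or_ne m 0 with rfl | hm0
  · -- x = a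
    obtain rfl : x = a := by simpa using hxeq
    rcases eq_or_ne n 0 with rfl | hn0
    · omega
    · have hey : exps y = insert d (exps b) := by
        conv_lhs => rw [hyeq]
        exact exps_eq (by exact_mod_cast hn0) (nat_lt_omega0 _) hb
      rw [hmain, hey]
      ext z
      simp only [Set.mem_insert_iff, Set.mem_union]
      tauto
  · have hex : exps x = insert d (exps a) := by
      conv_lhs => rw [hxeq]
      exact exps_eq (by exact_mod_cast hm0) (nat_lt_omega0 _) ha
    rcases eq_or_ne n 0 with rfl | hn0
    · obtain rfl : y = b := by simpa using hyeq
      rw [hmain, hex]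
      ext z
      simp only [Set.mem_insert_iff, Set.mem_union]
      tauto
    · have hey : exps y = insert d (exps b) := by
        conv_lhs => rw [hyeq]
        exact exps_eq (by exact_mod_cast hn0) (nat_lt_omega0 _) hb
      rw [hmain, hex, hey]
      ext z
      simp only [Set.mem_insert_iff, Set.mem_union]
      tauto

theorem rebuild {α : Ordinal} {X : Set Ordinal} :
    ∀ o : Ordinal, (∀ e ∈ exps o, Ordinal.omega0 ^ e ∈ H α X) → o ∈ H α X := by
  intro o
  induction o using Ordinal.induction with
  | h o IH =>
  intro h
  rcases eq_or_ne o 0 with rfl | h0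
  · exact zero_mem_H α X
  set d : Ordinal := Ordinal.log Ordinal.omega0 o with hd
  have holt : o < Ordinal.omega0 ^ d * Ordinal.omega0 := by
    rw [← opow_succ]; exact lt_opow_succ_log_self one_lt_omega0 o
  obtain ⟨m, a, ha, hoeq, hao, hobig, _⟩ := split_at d o holt
  have hdo : Ordinal.omega0 ^ d ≤ o := Ordinal.opow_log_le_self _ h0
  obtain ⟨hm0, hlt⟩ := hobig hdo
  have hexps : exps o = insert d (exps a) := by
    conv_lhs => rw [hoeq]
    exact exps_eq (by exact_mod_cast hm0) (nat_lt_omega0 _) ha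
  have hda : Ordinal.omega0 ^ d ∈ H α X := h d (by rw [hexps]; exact Set.mem_insert _ _)
  have haH : a ∈ H α X := IH a hlt fun e he => h e (by rw [hexps]; exact Set.mem_insert_of_mem _ he)
  rw [hoeq]
  exact add_mem_H (opow_mul_nat_mem_H hda m) haH

end Split

section Invariant

/-- The invariant set used to prove closure properties of `H`. -/
def Sinv (α β : Ordinal) : Set Ordinal :=
  {δ | δ ∈ H α (Set.Iio β) ∧
    (∀ e ∈ exps δ, Ordinal.omega0 ^ e ∈ H α (Set.Iio β) ∧ e ∈ H α (Set.Iio β)) ∧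
    (∀ g : Ordinal, Om g = δ → g ∈ H α (Set.Iio β))}

theorem Sinv_zero (α β : Ordinal) : (0 : Ordinal) ∈ Sinv α β := by
  refine ⟨zero_mem_H α _, ?_, ?_⟩
  · rw [exps_zero]; intro e he; exact absurd he (Set.notMem_empty e)
  · intro g hg
    rcases eq_or_ne g 0 with rfl | hg0
    · exact zero_mem_H α _
    · exact absurd hg (Om_pos hg0).ne'

theorem opow_injective {x y : Ordinal} (h : Ordinal.omega0 ^ x = Ordinal.omega0 ^ y) : x = y := by
  by_contra hne
  rcases lt_or_gt_of_ne hne with hlt | hlt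
  · exact absurd h ((opow_lt_opow_iff_right one_lt_omega0).2 hlt).ne
  · exact absurd h.symm ((opow_lt_opow_iff_right one_lt_omega0).2 hlt).ne

/-- `Sinv` for an additively indecomposable member of `H` that is a fixed point of `ω ^ ·`. -/
theorem Sinv_eps {α β p : Ordinal} (hp : p ∈ H α (Set.Iio β))
    (heps : Ordinal.omega0 ^ p = p) (hOm : ∀ g : Ordinal, Om g = p → g ∈ H α (Set.Iio β)) :
    p ∈ Sinv α β := by
  refine ⟨hp, ?_, hOm⟩
  intro e he
  rw [← heps, exps_opow, Set.mem_singleton_iff] at he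
  subst he
  exact ⟨by rwa [heps], hp⟩

theorem Sinv_mem_HFam (α β : Ordinal) : Sinv α β ∈ HFam α (Set.Iio β) := by
  constructor
  · -- base elements
    rintro x (hx | hx)
    · -- x < β
      have hxH : x ∈ H α (Set.Iio β) := subset_H α _ hx
      refine ⟨hxH, ?_, ?_⟩
      · intro e he
        have heβ : e < β := (exps_le e he).trans_lt hx
        have heH : e ∈ H α (Set.Iio β) := subset_H α _ heβ
        exact ⟨opow_mem_H heH, heH⟩
      · intro g hg
        have : g < β := ((self_le_Om g).trans_eq hg).trans_lt hx
        exact subset_H α _ this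
    · rcases hx with rfl | hx
      · exact Sinv_zero α β
      · -- x = I
        rcases Set.mem_singleton_iff.1 hx with rfl
        rcases I_cases with hI0 | ⟨hIeps, hOmI, _⟩
        · rw [hI0]; exact Sinv_zero α β
        · refine Sinv_eps (I_mem_H α _) hIeps ?_
          intro g hg
          have : g = I := Om_inj (hg.trans hOmI.symm)
          rw [this]; exact I_mem_H α _
  refine ⟨?_, ?_, ?_, ?_⟩
  · -- addition
    rintro γ ⟨hγH, hγe, hγOm⟩ δ ⟨hδH, hδe, hδOm⟩
    refine ⟨add_mem_H hγH hδH, ?_, ?_⟩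
    · intro e he
      rcases exps_add γ δ he with h | h
      · exact hγe e h
      · exact hδe e h
    · intro g hg
      rcases eq_or_ne g 0 with rfl | hg0
      · exact zero_mem_H α _
      have hγle : γ ≤ Om g := by rw [hg]; exact le_self_add
      have hδle : δ ≤ Om g := by rw [hg]; exact le_add_self
      rcases hδle.lt_or_eq with hδlt | hδeq
      · rcases hγle.lt_or_eq with hγlt | hγeq
        · exact absurd hg.symm (Om_principal hg0 hγlt hδlt).ne
        · exact hγOm g hγeq.symm
      · exact hδOm g hδeq.symm
  · -- ω ^ ·
    rintro γ ⟨hγH, _, hγOm⟩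
    refine ⟨opow_mem_H hγH, ?_, ?_⟩
    · intro e he
      rw [exps_opow, Set.mem_singleton_iff] at he
      subst he
      exact ⟨opow_mem_H hγH, hγH⟩
    · intro g hg
      rcases eq_or_ne g 0 with rfl | hg0
      · exact zero_mem_H α _
      have : γ = Om g := opow_injective (by rw [Om_eps hg0]; exact hg.symm)
      exact hγOm g this.symm
  · -- Om
    rintro γ ⟨hγH, _, hγOm⟩
    rcases eq_or_ne γ 0 with rfl | hγ0
    · rw [Om_zero]; exact Sinv_zero α β
    refine Sinv_eps (Om_mem_H hγH) (Om_eps hγ0) ?_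
    intro g hg
    rcases eq_or_ne g 0 with rfl | hg0
    · rw [Om_zero] at hg; exact absurd hg.symm (Om_pos hγ0).ne'
    · rw [Om_inj hg]; exact hγH
  · -- psi
    rintro σ hσR β' ⟨hβ'H, _, _⟩ hβ'α ⟨hσH, hσe, hσOm⟩
    set p : Ordinal := psiOf (H β') σ with hpdef
    have hpH : p ∈ H α (Set.Iio β) := psi_mem_H hσR hβ'H hβ'α hσH
    rcases psiOf_cases (H β') σ with hpσ | ⟨hpσ, hσmem, htrap⟩
    · rw [hpdef, hpσ]; exact ⟨hσH, hσe, hσOm⟩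
    -- p < σ
    -- σ = Om ν with ν ≠ 0
    obtain ⟨ν, hν0, hσν⟩ : ∃ ν : Ordinal, ν ≠ 0 ∧ σ = Om ν := by
      rcases hσR with ⟨μ, _, hμ⟩ | hI
      · exact ⟨μ + 1, by rw [Ordinal.add_one_eq_succ]; exact (Order.succ_ne_bot μ), hμ⟩
      · rcases I_cases with hI0 | ⟨_, hOmI, hIne⟩
        · exfalso; rw [hI, hI0] at hpσ; exact not_lt_zero hpσ
        · exact ⟨I, hIne, by rw [hI, hOmI]⟩
    have hσlim : Order.IsSuccLimit σ := by rw [hσν]; exact Om_isLimit hν0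
    have hσeps : Ordinal.omega0 ^ σ = σ := by rw [hσν]; exact Om_eps hν0
    -- p is closed under successors and ω ^ ·
    have hsucc : ∀ x < p, Order.succ x < p := by
      intro x hx
      have hxH : x ∈ H β' (Set.Iio p) := subset_H β' _ hx
      have : x + 1 ∈ H β' (Set.Iio p) := add_mem_H hxH (one_mem_H β' _)
      have hlt : x + 1 < σ := by
        rw [Ordinal.add_one_eq_succ]
        exact hσlim.succ_lt (hx.trans hpσ)
      have := htrap ⟨this, hlt⟩
      rwa [Ordinal.add_one_eq_succ] at this
    have hopow : ∀ x < p, Ordinal.omega0 ^ x < p := by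
      intro x hx
      have hxH : x ∈ H β' (Set.Iio p) := subset_H β' _ hx
      have h1 : Ordinal.omega0 ^ x ∈ H β' (Set.Iio p) := opow_mem_H hxH
      have h2 : Ordinal.omega0 ^ x < σ := by
        rw [← hσeps]
        exact (opow_lt_opow_iff_right one_lt_omega0).2 (hx.trans hpσ)
      exact htrap ⟨h1, h2⟩
    rcases eq_or_ne p 0 with hp0 | hp0
    · rw [hp0]; exact Sinv_zero α β
    have hplim : Order.IsSuccLimit p :=
        Ordinal.isSuccLimit_iff.2 ⟨hp0, Order.isSuccPrelimit_of_succ_lt hsucc⟩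
    have hpeps : Ordinal.omega0 ^ p = p := by
      apply le_antisymm
      · exact (opow_le_of_isSuccLimit omega0_ne_zero hplim).2 fun x hx => (hopow x hx).le
      · exact right_le_opow p one_lt_omega0
    refine Sinv_eps hpH hpeps ?_
    intro g hg
    rcases eq_or_ne g 0 with rfl | hg0
    · exact zero_mem_H α _
    have hgle : g ≤ p := hg ▸ self_le_Om g
    rcases hgle.lt_or_eq with hglt | hgeq
    · exfalso
      have hgH : g ∈ H β' (Set.Iio p) := subset_H β' _ hglt
      have h1 : Om g ∈ H β' (Set.Iio p) := Om_mem_H hgH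
      have h2 : Om g < σ := hg ▸ hpσ
      have := htrap ⟨h1, h2⟩
      rw [hg] at this
      exact lt_irrefl p this
    · rw [hgeq]; exact hpH

theorem H_subset_Sinv (α β : Ordinal) : H α (Set.Iio β) ⊆ Sinv α β :=
  H_min (Sinv_mem_HFam α β)

end Invariant

theorem stmt4 (hex : ∃ c : Cardinal, WeaklyInaccessible c) (α β : Ordinal) :
    (∀ γ ∈ H α (Set.Iio β), ∀ δ ∈ H α (Set.Iio β), γ ♯ δ ∈ H α (Set.Iio β)) ∧
    (∀ γ δ : Ordinal, γ ♯ δ ∈ H α (Set.Iio β) →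
      γ ∈ H α (Set.Iio β) ∧ δ ∈ H α (Set.Iio β)) ∧
    (∀ γ : Ordinal, Ordinal.omega0 ^ γ ∈ H α (Set.Iio β) → γ ∈ H α (Set.Iio β)) ∧
    (∀ γ : Ordinal, Om γ ∈ H α (Set.Iio β) → γ ∈ H α (Set.Iio β)) := by
  refine ⟨?_, ?_, ?_, ?_⟩
  · intro γ hγ δ hδ
    obtain ⟨-, hγe, -⟩ := H_subset_Sinv α β hγ
    obtain ⟨-, hδe, -⟩ := H_subset_Sinv α β hδ
    refine rebuild _ ?_
    intro e he
    rw [exps_nadd] at he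
    rcases he with h | h
    · exact (hγe e h).1
    · exact (hδe e h).1
  · intro γ δ h
    obtain ⟨-, he, -⟩ := H_subset_Sinv α β h
    rw [exps_nadd] at he
    constructor
    · exact rebuild _ fun e hee => (he e (Or.inl hee)).1
    · exact rebuild _ fun e hee => (he e (Or.inr hee)).1
  · intro γ h
    obtain ⟨-, he, -⟩ := H_subset_Sinv α β h
    exact (he γ (by rw [exps_opow]; exact Set.mem_singleton γ)).2
  · intro γ h
    obtain ⟨-, -, hOm⟩ := H_subset_Sinv α β h
    exact hOm γ rfl
end
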